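/- Let h:𝕏_T→ℝ be measurable with ∫_{𝕏_T}|h(s,x)|² ν_T(ds,dx)<∞, and suppose that for every δ>0 and every measurable E⊆𝕏_T with ν_T(E)<∞ one has ∫_E exp(δ|h(s,x)|) ν_T(ds,dx)<∞. Fix N∈ℕ. Then for every ε>0 there exists a compact set K_ε⊆𝕏 such that sup_{g∈S^N} ∫_0^T ∫_{𝕏∖K_ε} |h(s,x)|·|g(s,x)−1| ν(dx) ds ≤ ε. -/

import Mathlib

open MeasureTheory Real Filter
open scoped ENNReal

/-- Young-type inequality: `x * y ≤ exp x + (y log y - y)` for `y ≥ 0`. -/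
lemma young_aux (x y : ℝ) (hy : 0 ≤ y) :
    x * y ≤ Real.exp x + (y * Real.log y - y) := by
  rcases eq_or_lt_of_le hy with rfl | hy
  · simpa using (Real.exp_pos x).le
  · have h1 : (x - Real.log y) + 1 ≤ Real.exp (x - Real.log y) :=
      Real.add_one_le_exp _
    have h2 : Real.exp (x - Real.log y) = Real.exp x / y := by
      rw [Real.exp_sub, Real.exp_log hy]
    have h3 := mul_le_mul_of_nonneg_left h1 hy.le
    rw [h2] at h3
    have h4 : y * (Real.exp x / y) = Real.exp x := by field_simp
    nlinarith [h3, h4]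

lemma ent_nonneg (b : ℝ) (hb : 0 ≤ b) : 0 ≤ b * Real.log b - b + 1 := by
  have := young_aux 0 b hb
  simp at this
  linarith

/-- Master pointwise inequality. -/
lemma master_aux (σ a b : ℝ) (hσ : 0 < σ) (ha : 0 ≤ a) (hb : 0 ≤ b) :
    σ * (a * |b - 1|) ≤ (Real.exp (σ * a) - σ * a - 1) + (σ * a) ^ 2
      + (b * Real.log b - b + 1) := by
  have hE : 0 ≤ Real.exp (σ * a) - σ * a - 1 := by
    nlinarith [Real.add_one_le_exp (σ * a)]
  have hx : 0 ≤ σ * a := mul_nonneg hσ.le ha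
  rcases le_total 1 b with hb1 | hb1
  · rw [abs_of_nonneg (by linarith)]
    have hy := young_aux (σ * a) b hb
    nlinarith [sq_nonneg (σ * a), ent_nonneg b hb]
  · rw [abs_of_nonpos (by linarith)]
    have h1 := young_aux (-(σ * a)) b hb
    have hx1 : (0:ℝ) < 1 + σ * a := by linarith
    have h2 : Real.exp (-(σ * a)) ≤ 1 / (1 + σ * a) := by
      rw [Real.exp_neg]
      have := Real.add_one_le_exp (σ * a)
      rw [inv_eq_one_div]
      exact one_div_le_one_div_of_le hx1 (by linarith)
    have h3 : σ * a + 1 / (1 + σ * a) - 1 ≤ (σ * a) ^ 2 := by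
      have h5 : 1 / (1 + σ * a) ≤ 1 - σ * a + (σ * a) ^ 2 := by
        rw [div_le_iff₀ hx1]
        nlinarith [pow_nonneg hx 3, sq_nonneg (σ * a)]
      nlinarith [sq_nonneg (σ * a)]
    nlinarith

/-- Refined pointwise inequality with the indicator split. -/
lemma key_real_aux (σ a b : ℝ) (hσ : 0 < σ) (ha : 0 ≤ a) (hb : 0 ≤ b) :
    σ * (a * |b - 1|) ≤ σ ^ 2 * (1 + Real.exp σ) * a ^ 2
      + (if 1 < a then Real.exp (σ * a) else 0) + (b * Real.log b - b + 1) := by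
  have hm := master_aux σ a b hσ ha hb
  have hx : 0 ≤ σ * a := mul_nonneg hσ.le ha
  split_ifs with hi
  · have h1 : Real.exp (σ * a) - σ * a - 1 ≤ Real.exp (σ * a) := by linarith
    nlinarith [Real.exp_pos σ, sq_nonneg a, mul_nonneg (mul_nonneg hσ.le hσ.le) (sq_nonneg a)]
  · push_neg at hi
    have h1 : Real.exp (σ * a) - 1 ≤ (σ * a) * Real.exp (σ * a) := by
      have h0 := Real.add_one_le_exp (-(σ * a))
      have he := Real.exp_pos (σ * a)
      have hmul : Real.exp (-(σ * a)) * Real.exp (σ * a) = 1 := by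
        rw [← Real.exp_add]; simp
      nlinarith [mul_le_mul_of_nonneg_right h0 he.le]
    have h2 : Real.exp (σ * a) - σ * a - 1 ≤ (σ * a) ^ 2 * Real.exp (σ * a) := by
      nlinarith [h1, hx, Real.exp_pos (σ * a)]
    have h3 : Real.exp (σ * a) ≤ Real.exp σ := Real.exp_le_exp.2 (by nlinarith)
    nlinarith [sq_nonneg (σ * a), mul_nonneg (mul_nonneg hx hx) (Real.exp_pos (σ * a)).le,
      mul_nonneg (mul_nonneg hx hx) (sub_nonneg.2 h3)]

theorem stmt_3
    {𝕏 : Type*} [TopologicalSpace 𝕏] [PolishSpace 𝕏] [LocallyCompactSpace 𝕏]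
    [MeasurableSpace 𝕏] [BorelSpace 𝕏]
    (T : ℝ) (hT : 0 < T)
    (ν : Measure 𝕏) [SigmaFinite ν] (hνK : ∀ Kc : Set 𝕏, IsCompact Kc → ν Kc < ⊤)
    (νT : Measure (ℝ × 𝕏)) (hνT : νT = (volume.restrict (Set.Icc 0 T)).prod ν)
    (h : ℝ × 𝕏 → ℝ) (hm : Measurable h)
    (hL2 : ∫⁻ q, ENNReal.ofReal (|h q| ^ 2) ∂νT < ⊤)
    (hexp : ∀ δ : ℝ, 0 < δ → ∀ E : Set (ℝ × 𝕏), MeasurableSet E → νT E < ⊤ →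
        ∫⁻ q in E, ENNReal.ofReal (Real.exp (δ * |h q|)) ∂νT < ⊤)
    (N : ℕ) :
    ∀ ε : ℝ, 0 < ε → ∃ Kε : Set 𝕏, IsCompact Kε ∧
      ∀ g ∈ {g : ℝ × 𝕏 → ℝ | Measurable g ∧ (∀ q, 0 ≤ g q) ∧
          ∫⁻ q, ENNReal.ofReal (g q * Real.log (g q) - g q + 1) ∂νT ≤ (N : ℝ≥0∞)},
        ∫⁻ q in (Set.univ : Set ℝ) ×ˢ Kεᶜ, ENNReal.ofReal (|h q| * |g q - 1|) ∂νT
          ≤ ENNReal.ofReal ε := by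
  intro ε hε
  -- choose the parameter σ
  set σ : ℝ := (2 * N + 2) / ε with hσdef
  have hσ : 0 < σ := by positivity
  set C : ℝ := σ ^ 2 * (1 + Real.exp σ) with hCdef
  have hC : 0 < C := by positivity
  set c : ℝ≥0∞ := ENNReal.ofReal (1 / σ) with hcdef
  have hc_ne : c ≠ ⊤ := ENNReal.ofReal_ne_top
  -- the bad set where |h| is large
  set S : Set (ℝ × 𝕏) := {q | 1 < |h q|} with hSdef
  have hSmeas : MeasurableSet S := measurableSet_lt measurable_const hm.abs
  have hSfin : νT S < ⊤ := by
    have h1 : νT S = ∫⁻ _ in S, 1 ∂νT := (setLIntegral_one S).symm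
    have h2 : ∫⁻ _ in S, (1:ℝ≥0∞) ∂νT ≤ ∫⁻ q in S, ENNReal.ofReal (|h q| ^ 2) ∂νT := by
      refine setLIntegral_mono ((hm.abs.pow_const 2).ennreal_ofReal) (fun q hq => ?_)
      have : (1:ℝ) ≤ |h q| ^ 2 := by
        have : 1 < |h q| := hq
        nlinarith
      simpa using ENNReal.ofReal_le_ofReal this
    calc νT S = ∫⁻ _ in S, 1 ∂νT := h1
      _ ≤ ∫⁻ q in S, ENNReal.ofReal (|h q| ^ 2) ∂νT := h2
      _ ≤ ∫⁻ q, ENNReal.ofReal (|h q| ^ 2) ∂νT := setLIntegral_le_lintegral _ _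
      _ < ⊤ := hL2
  -- the dominating function
  set F₂ : ℝ × 𝕏 → ℝ≥0∞ := S.indicator (fun q => ENNReal.ofReal (Real.exp (σ * |h q|)))
    with hF₂def
  set F : ℝ × 𝕏 → ℝ≥0∞ := fun q => c * ENNReal.ofReal (C * |h q| ^ 2) + c * F₂ q with hFdef
  have hF₂meas : Measurable F₂ :=
    ((hm.abs.const_mul σ).exp.ennreal_ofReal).indicator hSmeas
  have hFmeas : Measurable F := by
    apply Measurable.add (f := fun q => c * ENNReal.ofReal (C * |h q| ^ 2)) (g := fun q => c * F₂ q)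
    · exact (((hm.abs.pow_const 2).const_mul C).ennreal_ofReal).const_mul c
    · exact hF₂meas.const_mul c
  -- total integral of F is finite
  have hI1 : ∫⁻ q, ENNReal.ofReal (C * |h q| ^ 2) ∂νT < ⊤ := by
    have heq : ∀ q, ENNReal.ofReal (C * |h q| ^ 2)
        = ENNReal.ofReal C * ENNReal.ofReal (|h q| ^ 2) := fun q =>
      ENNReal.ofReal_mul hC.le
    calc ∫⁻ q, ENNReal.ofReal (C * |h q| ^ 2) ∂νT
        = ∫⁻ q, ENNReal.ofReal C * ENNReal.ofReal (|h q| ^ 2) ∂νT := by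
          simp_rw [heq]
      _ = ENNReal.ofReal C * ∫⁻ q, ENNReal.ofReal (|h q| ^ 2) ∂νT :=
          lintegral_const_mul' _ _ ENNReal.ofReal_ne_top
      _ < ⊤ := ENNReal.mul_lt_top ENNReal.ofReal_lt_top hL2
  have hI2 : ∫⁻ q, F₂ q ∂νT < ⊤ := by
    rw [hF₂def, lintegral_indicator hSmeas]
    exact hexp σ hσ S hSmeas hSfin
  have hIF : ∫⁻ q, F q ∂νT < ⊤ := by
    rw [hFdef]
    rw [lintegral_add_left ((((hm.abs.pow_const 2).const_mul C).ennreal_ofReal).const_mul c)]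
    rw [lintegral_const_mul' _ _ hc_ne, lintegral_const_mul' _ _ hc_ne]
    exact ENNReal.add_lt_top.2
      ⟨ENNReal.mul_lt_top (hcdef ▸ ENNReal.ofReal_lt_top) hI1,
       ENNReal.mul_lt_top (hcdef ▸ ENNReal.ofReal_lt_top) hI2⟩
  -- the measure with density F
  set μ : Measure (ℝ × 𝕏) := νT.withDensity F with hμdef
  -- compact exhaustion
  set Kc : ℕ → Set 𝕏 := compactCovering 𝕏 with hKcdef
  set A : ℕ → Set (ℝ × 𝕏) := fun n => (Set.univ : Set ℝ) ×ˢ (Kc n)ᶜ with hAdef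
  have hAmeas : ∀ n, MeasurableSet (A n) := fun n =>
    MeasurableSet.univ.prod (isCompact_compactCovering 𝕏 n).isClosed.measurableSet.compl
  have hAanti : Antitone A := fun m n hmn =>
    Set.prod_mono subset_rfl (Set.compl_subset_compl.2 (compactCovering_subset 𝕏 hmn))
  have hAiInter : ⋂ n, A n = ∅ := by
    ext q
    simp only [Set.mem_iInter, hAdef, Set.mem_prod, Set.mem_univ, true_and, Set.mem_compl_iff,
      Set.mem_empty_iff_false, iff_false, not_forall, not_not]
    exact exists_mem_compactCovering q.2
  have htend : Tendsto (fun n => μ (A n)) atTop (nhds 0) := by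
    have := tendsto_measure_iInter_atTop (μ := μ)
      (fun n => (hAmeas n).nullMeasurableSet) hAanti
      ⟨0, by
        refine ne_of_lt (lt_of_le_of_lt (measure_mono (Set.subset_univ _)) ?_)
        rw [hμdef, withDensity_apply F MeasurableSet.univ, Measure.restrict_univ]
        exact hIF⟩
    rw [hAiInter, measure_empty] at this
    exact this
  have hev : ∃ n, μ (A n) < ENNReal.ofReal (ε / 2) := by
    have hpos : (0:ℝ≥0∞) < ENNReal.ofReal (ε / 2) := by
      rw [ENNReal.ofReal_pos]; linarith
    exact (htend.eventually_lt_const hpos).exists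
  obtain ⟨n, hn⟩ := hev
  refine ⟨Kc n, isCompact_compactCovering 𝕏 n, ?_⟩
  rintro g ⟨hgmeas, hgnn, hgent⟩
  -- pointwise bound
  have hkey : ∀ q, ENNReal.ofReal (|h q| * |g q - 1|)
      ≤ F q + c * ENNReal.ofReal (g q * Real.log (g q) - g q + 1) := by
    intro q
    have hineq := key_real_aux σ (|h q|) (g q) hσ (abs_nonneg _) (hgnn q)
    have hrw : |h q| * |g q - 1| = (1 / σ) * (σ * (|h q| * |g q - 1|)) := by
      field_simp
    rw [hrw, ENNReal.ofReal_mul (by positivity)]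
    have hsplit : ENNReal.ofReal (σ * (|h q| * |g q - 1|))
        ≤ ENNReal.ofReal (C * |h q| ^ 2)
          + ENNReal.ofReal (if 1 < |h q| then Real.exp (σ * |h q|) else 0)
          + ENNReal.ofReal (g q * Real.log (g q) - g q + 1) := by
      rw [← ENNReal.ofReal_add (by positivity)
          (by split_ifs; exacts [(Real.exp_pos _).le, le_rfl]),
        ← ENNReal.ofReal_add
          (by
            have h2 : (0:ℝ) ≤ if 1 < |h q| then Real.exp (σ * |h q|) else 0 := by
              split_ifs; exacts [(Real.exp_pos _).le, le_rfl]
            positivity)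
          (ent_nonneg _ (hgnn q))]
      exact ENNReal.ofReal_le_ofReal (by rw [hCdef]; exact hineq)
    have hind : ENNReal.ofReal (if 1 < |h q| then Real.exp (σ * |h q|) else 0) = F₂ q := by
      rw [hF₂def, Set.indicator_apply]
      by_cases hq : q ∈ S
      · have h1q : (1:ℝ) < |h q| := hq
        rw [if_pos hq, if_pos h1q]
      · have h1q : ¬ (1:ℝ) < |h q| := hq
        rw [if_neg hq, if_neg h1q, ENNReal.ofReal_zero]
    rw [hind] at hsplit
    calc ENNReal.ofReal (1 / σ) * ENNReal.ofReal (σ * (|h q| * |g q - 1|))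
        ≤ c * (ENNReal.ofReal (C * |h q| ^ 2) + F₂ q
            + ENNReal.ofReal (g q * Real.log (g q) - g q + 1)) := by
          rw [hcdef]; exact mul_le_mul_right hsplit _
      _ = F q + c * ENNReal.ofReal (g q * Real.log (g q) - g q + 1) := by
          rw [hFdef]; ring
  -- assemble
  have hbound1 : ∫⁻ q in A n, F q ∂νT ≤ ENNReal.ofReal (ε / 2) := by
    rw [← withDensity_apply F (hAmeas n)]
    exact hn.le
  have hbound2 : ∫⁻ q in A n, c * ENNReal.ofReal (g q * Real.log (g q) - g q + 1) ∂νT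
      ≤ ENNReal.ofReal (ε / 2) := by
    rw [lintegral_const_mul' _ _ hc_ne]
    have h1 : ∫⁻ q in A n, ENNReal.ofReal (g q * Real.log (g q) - g q + 1) ∂νT
        ≤ (N : ℝ≥0∞) := le_trans (setLIntegral_le_lintegral _ _) hgent
    calc c * ∫⁻ q in A n, ENNReal.ofReal (g q * Real.log (g q) - g q + 1) ∂νT
        ≤ c * (N : ℝ≥0∞) := mul_le_mul_right h1 _
      _ = ENNReal.ofReal ((1 / σ) * N) := by
          rw [hcdef, ENNReal.ofReal_mul (by positivity), ENNReal.ofReal_natCast]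
      _ ≤ ENNReal.ofReal (ε / 2) := by
          apply ENNReal.ofReal_le_ofReal
          rw [hσdef, one_div_div, div_mul_eq_mul_div, div_le_div_iff₀ (by positivity) (by norm_num)]
          nlinarith [hε.le, mul_nonneg hε.le (Nat.cast_nonneg (α := ℝ) N)]
  calc ∫⁻ q in (Set.univ : Set ℝ) ×ˢ (Kc n)ᶜ, ENNReal.ofReal (|h q| * |g q - 1|) ∂νT
      ≤ ∫⁻ q in A n, (F q + c * ENNReal.ofReal (g q * Real.log (g q) - g q + 1)) ∂νT :=
        lintegral_mono fun q => hkey q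
    _ = (∫⁻ q in A n, F q ∂νT)
        + ∫⁻ q in A n, c * ENNReal.ofReal (g q * Real.log (g q) - g q + 1) ∂νT :=
        lintegral_add_left hFmeas _
    _ ≤ ENNReal.ofReal (ε / 2) + ENNReal.ofReal (ε / 2) := add_le_add hbound1 hbound2
    _ = ENNReal.ofReal ε := by
        rw [← ENNReal.ofReal_add (by linarith) (by linarith)]
        norm_num
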